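/- Let α ∈ (0,1), T_b ≥ 0, M ≥ 0, T_∞ ≥ 0 with T_∞ ≤ T_b + M. Let T : [0,∞) → ℝ be continuous with T(0) = T_b, 0 ≤ T(x) ≤ T_b + 2M, and |T(x) − T_∞| ≤ M e^{-αx} for all x ≥ 0. Let ψ_b : (0,1] → ℝ be measurable. Define ψ(x,μ) := ψ_b(μ) e^{-x/μ} + ∫₀ˣ μ⁻¹ e^{-(x-s)/μ} T(s)⁴ ds for μ ∈ (0,1], and ψ(x,μ) := −∫ₓ^∞ μ⁻¹ e^{-(x-s)/μ} T(s)⁴ ds for μ ∈ [-1,0). Then for every x ≥ 0: |ψ(x,μ) − T_∞⁴| ≤ |ψ_b(μ) − T_b⁴| e^{-x/μ} + 4 (T_b + 2M)³ M e^{-αx} / (1 − μα) for every μ ∈ (0,1], and |ψ(x,μ) − T_∞⁴| ≤ 4 (T_b + 2M)³ M e^{-αx} / (1 − μα) for every μ ∈ [-1,0). -/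

import Mathlib

open MeasureTheory Set

lemma pow4_diff {a b C : ℝ} (ha : a ∈ Set.Icc 0 C) (hb : b ∈ Set.Icc 0 C) :
    |a^4 - b^4| ≤ 4*C^3*|a - b| := by
  obtain ⟨ha0, haC⟩ := ha
  obtain ⟨hb0, hbC⟩ := hb
  have key : a^4 - b^4 = (a-b)*(a^3+a^2*b+a*b^2+b^3) := by ring
  rw [key, abs_mul, mul_comm]
  have h1 : |a^3+a^2*b+a*b^2+b^3| ≤ 4*C^3 := by
    rw [abs_of_nonneg (by positivity)]
    nlinarith [pow_le_pow_left₀ ha0 haC 3, pow_le_pow_left₀ hb0 hbC 3,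
      mul_le_mul (pow_le_pow_left₀ ha0 haC 2) hbC hb0 (by positivity),
      mul_le_mul haC (pow_le_pow_left₀ hb0 hbC 2) (by positivity) (le_trans ha0 haC)]
  exact mul_le_mul_of_nonneg_right h1 (abs_nonneg _)

lemma int_exp_mul (c x : ℝ) (hc : c ≠ 0) :
    ∫ s in (0:ℝ)..x, Real.exp (c*s) = (Real.exp (c*x) - 1)/c := by
  have hderiv : ∀ s ∈ Set.uIcc (0:ℝ) x,
      HasDerivAt (fun s => Real.exp (c*s)/c) (Real.exp (c*s)) s := by
    intro s _
    have h1 : HasDerivAt (fun s : ℝ => c*s) c s := by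
      simpa using (hasDerivAt_id s).const_mul c
    have h2 := ((Real.hasDerivAt_exp (c*s)).comp s h1).div_const c
    exact h2.congr_deriv (by field_simp)
  have := intervalIntegral.integral_eq_sub_of_hasDerivAt hderiv
    ((Real.continuous_exp.comp (continuous_const.mul continuous_id)).intervalIntegrable 0 x)
  simp only [mul_zero, Real.exp_zero] at this
  rw [this]; ring

lemma int_exp_weight (μ a x : ℝ) (hμ : 0 < μ) (h : 1 - μ*a ≠ 0) :
    ∫ s in (0:ℝ)..x, μ⁻¹ * Real.exp (-(x - s)/μ) * Real.exp (-a*s)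
      = (Real.exp (-a*x) - Real.exp (-x/μ)) / (1 - μ*a) := by
  have hμ' : μ ≠ 0 := ne_of_gt hμ
  set c : ℝ := 1/μ - a with hc
  have hcne : c ≠ 0 := by
    intro h0
    apply h
    have : μ * c = 1 - μ*a := by rw [hc]; field_simp
    rw [← this, h0, mul_zero]
  have hrw : ∀ s : ℝ, μ⁻¹ * Real.exp (-(x - s)/μ) * Real.exp (-a*s)
      = (μ⁻¹ * Real.exp (-x/μ)) * Real.exp (c*s) := by
    intro s
    rw [mul_assoc, mul_assoc, ← Real.exp_add, ← Real.exp_add]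
    congr 2
    rw [hc]
    field_simp
    ring
  rw [intervalIntegral.integral_congr (fun s _ => hrw s),
    intervalIntegral.integral_const_mul, int_exp_mul c x hcne]
  have e1 : Real.exp (c*x) * Real.exp (-x/μ) = Real.exp (-a*x) := by
    rw [← Real.exp_add]
    congr 1
    rw [hc]
    field_simp
    ring
  have hmc : μ * c = 1 - μ*a := by rw [hc]; field_simp
  rw [← hmc, ← e1]
  field_simp

lemma int_exp_Ioi (b x : ℝ) (hb : 0 < b) :
    ∫ s in Set.Ioi x, Real.exp (-b*s) = Real.exp (-b*x)/b := by
  have hderiv : ∀ s ∈ Set.Ici x, HasDerivAt (fun s => -Real.exp (-b*s)/b) (Real.exp (-b*s)) s := by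
    intro s _
    have h1 : HasDerivAt (fun s : ℝ => -b*s) (-b) s := by
      simpa using (hasDerivAt_id s).const_mul (-b)
    have h2 := ((Real.hasDerivAt_exp (-b*s)).comp s h1).neg.div_const b
    have hb' : b ≠ 0 := ne_of_gt hb
    exact h2.congr_deriv (by field_simp)
  have hint : IntegrableOn (fun s => Real.exp (-b*s)) (Set.Ioi x) := by
    exact exp_neg_integrableOn_Ioi x hb
  have htend : Filter.Tendsto (fun s => -Real.exp (-b*s)/b) Filter.atTop (nhds 0) := by
    have : Filter.Tendsto (fun s : ℝ => Real.exp (-(b*s))) Filter.atTop (nhds 0) := by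
      exact Real.tendsto_exp_atBot.comp
        (Filter.tendsto_neg_atBot_iff.mpr (Filter.Tendsto.const_mul_atTop hb Filter.tendsto_id))
    have h2 : Filter.Tendsto (fun s : ℝ => -Real.exp (-b*s)/b) Filter.atTop (nhds (-0/b)) := by
      simpa [neg_mul] using (this.neg.div_const b)
    simpa using h2
  have := MeasureTheory.integral_Ioi_of_hasDerivAt_of_tendsto' hderiv hint htend
  rw [this]; ring

set_option maxHeartbeats 1000000 in
theorem stmt_16 (α Tb M Tinf : ℝ) (hα : α ∈ Set.Ioo (0:ℝ) 1)
    (hTb : 0 ≤ Tb) (hM : 0 ≤ M) (hTinf : 0 ≤ Tinf) (hTinfle : Tinf ≤ Tb + M)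
    (T : ℝ → ℝ) (hTc : ContinuousOn T (Set.Ici 0)) (hT0 : T 0 = Tb)
    (hTbd : ∀ x ∈ Set.Ici (0:ℝ), T x ∈ Set.Icc 0 (Tb + 2*M))
    (hTdec : ∀ x ∈ Set.Ici (0:ℝ), |T x - Tinf| ≤ M * Real.exp (-α * x))
    (ψb : ℝ → ℝ) (hψbmeas : Measurable ψb)
    (ψ : ℝ → ℝ → ℝ)
    (hψpos : ∀ μ ∈ Set.Ioc (0:ℝ) 1, ∀ x ∈ Set.Ici (0:ℝ),
      ψ x μ = ψb μ * Real.exp (-x / μ)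
        + ∫ s in (0:ℝ)..x, μ⁻¹ * Real.exp (-(x - s) / μ) * T s ^ 4)
    (hψneg : ∀ μ ∈ Set.Ico (-1:ℝ) 0, ∀ x ∈ Set.Ici (0:ℝ),
      ψ x μ = -∫ s in Set.Ioi x, μ⁻¹ * Real.exp (-(x - s) / μ) * T s ^ 4) :
    ∀ x ∈ Set.Ici (0:ℝ),
      (∀ μ ∈ Set.Ioc (0:ℝ) 1,
        |ψ x μ - Tinf ^ 4| ≤ |ψb μ - Tb ^ 4| * Real.exp (-x / μ)
          + 4 * (Tb + 2*M) ^ 3 * M * Real.exp (-α * x) / (1 - μ * α)) ∧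
      (∀ μ ∈ Set.Ico (-1:ℝ) 0,
        |ψ x μ - Tinf ^ 4| ≤ 4 * (Tb + 2*M) ^ 3 * M * Real.exp (-α * x) / (1 - μ * α)) := by
  obtain ⟨hα0, hα1⟩ := hα
  have hC : (0:ℝ) ≤ Tb + 2*M := by linarith
  have hK : (0:ℝ) ≤ 4*(Tb + 2*M)^3*M := by positivity
  have hTbC : Tb ∈ Set.Icc 0 (Tb + 2*M) := ⟨hTb, by linarith⟩
  have hTinfC : Tinf ∈ Set.Icc 0 (Tb + 2*M) := ⟨hTinf, by linarith⟩
  have hTbTinf : |Tb - Tinf| ≤ M := by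
    have h := hTdec 0 Set.self_mem_Ici
    rw [hT0] at h
    simpa using h
  have hTb4 : |Tb^4 - Tinf^4| ≤ 4*(Tb + 2*M)^3*M := by
    refine le_trans (pow4_diff hTbC hTinfC) ?_
    nlinarith [pow_nonneg hC 3]
  have hT4 : ∀ s ∈ Set.Ici (0:ℝ), |T s^4 - Tinf^4| ≤ 4*(Tb + 2*M)^3*M * Real.exp (-α*s) := by
    intro s hs
    calc |T s^4 - Tinf^4| ≤ 4*(Tb + 2*M)^3*|T s - Tinf| := pow4_diff (hTbd s hs) hTinfC
    _ ≤ 4*(Tb + 2*M)^3*(M*Real.exp (-α*s)) :=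
        mul_le_mul_of_nonneg_left (hTdec s hs) (by positivity)
    _ = 4*(Tb + 2*M)^3*M * Real.exp (-α*s) := by ring
  intro x hx
  have hx0 : (0:ℝ) ≤ x := hx
  constructor
  · -- positive μ
    intro μ hμ
    obtain ⟨hμ0, hμ1⟩ := hμ
    have hμ' : μ ≠ 0 := ne_of_gt hμ0
    have hμα : 0 < 1 - μ*α := by nlinarith
    have hwcont : Continuous (fun s : ℝ => μ⁻¹ * Real.exp (-(x - s)/μ)) := by fun_prop
    have hsub : Set.uIcc (0:ℝ) x ⊆ Set.Ici 0 := by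
      rw [Set.uIcc_of_le hx0]; exact fun s hs => hs.1
    have hTco : ContinuousOn (fun s => T s ^ 4) (Set.uIcc 0 x) := (hTc.mono hsub).pow 4
    have hfi : IntervalIntegrable (fun s => μ⁻¹ * Real.exp (-(x - s)/μ) * T s ^ 4) volume 0 x :=
      (hwcont.continuousOn.mul hTco).intervalIntegrable
    have hgi : IntervalIntegrable (fun s => μ⁻¹ * Real.exp (-(x - s)/μ) * Tinf ^ 4) volume 0 x :=
      ((hwcont.mul continuous_const).continuousOn).intervalIntegrable
    have hIw : ∫ s in (0:ℝ)..x, μ⁻¹ * Real.exp (-(x - s)/μ) = 1 - Real.exp (-x/μ) := by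
      have h0 : (1:ℝ) - μ*0 ≠ 0 := by norm_num
      have h1 := int_exp_weight μ 0 x hμ0 h0
      simp only [neg_zero, zero_mul, Real.exp_zero, mul_one, mul_zero, sub_zero, div_one] at h1
      exact h1
    have hψx := hψpos μ ⟨hμ0, hμ1⟩ x hx
    have hsplit : ψ x μ - Tinf^4
        = (ψb μ - Tb^4)*Real.exp (-x/μ) + (Tb^4 - Tinf^4)*Real.exp (-x/μ)
          + ∫ s in (0:ℝ)..x, (μ⁻¹ * Real.exp (-(x - s)/μ) * T s ^ 4
              - μ⁻¹ * Real.exp (-(x - s)/μ) * Tinf ^ 4) := by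
      rw [intervalIntegral.integral_sub hfi hgi, intervalIntegral.integral_mul_const, hIw, hψx]
      ring
    have hbi : IntervalIntegrable
        (fun s => 4*(Tb + 2*M)^3*M * (μ⁻¹ * Real.exp (-(x - s)/μ) * Real.exp (-α*s)))
        volume 0 x := by
      apply Continuous.intervalIntegrable
      fun_prop
    have hptw : ∀ s ∈ Set.Icc 0 x,
        |μ⁻¹ * Real.exp (-(x - s)/μ) * T s ^ 4 - μ⁻¹ * Real.exp (-(x - s)/μ) * Tinf ^ 4|
          ≤ 4*(Tb + 2*M)^3*M * (μ⁻¹ * Real.exp (-(x - s)/μ) * Real.exp (-α*s)) := by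
      intro s hs
      have hw : 0 ≤ μ⁻¹ * Real.exp (-(x - s)/μ) := by positivity
      rw [show μ⁻¹ * Real.exp (-(x - s)/μ) * T s ^ 4 - μ⁻¹ * Real.exp (-(x - s)/μ) * Tinf ^ 4
          = (μ⁻¹ * Real.exp (-(x - s)/μ)) * (T s ^ 4 - Tinf ^ 4) from by ring,
        abs_mul, abs_of_nonneg hw]
      calc μ⁻¹ * Real.exp (-(x - s)/μ) * |T s ^ 4 - Tinf ^ 4|
          ≤ μ⁻¹ * Real.exp (-(x - s)/μ) * (4*(Tb + 2*M)^3*M * Real.exp (-α*s)) :=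
            mul_le_mul_of_nonneg_left (hT4 s hs.1) hw
        _ = 4*(Tb + 2*M)^3*M * (μ⁻¹ * Real.exp (-(x - s)/μ) * Real.exp (-α*s)) := by ring
    have hbnd : |∫ s in (0:ℝ)..x, (μ⁻¹ * Real.exp (-(x - s)/μ) * T s ^ 4
          - μ⁻¹ * Real.exp (-(x - s)/μ) * Tinf ^ 4)|
        ≤ 4*(Tb + 2*M)^3*M * ((Real.exp (-α*x) - Real.exp (-x/μ))/(1 - μ*α)) := by
      refine le_trans (intervalIntegral.abs_integral_le_integral_abs hx0) ?_
      have step := intervalIntegral.integral_mono_on hx0 ((hfi.sub hgi).abs) hbi hptw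
      refine le_trans step ?_
      rw [intervalIntegral.integral_const_mul, int_exp_weight μ α x hμ0 (ne_of_gt hμα)]
    have tri : |ψ x μ - Tinf^4|
        ≤ |ψb μ - Tb^4|  *Real.exp (-x/μ) + 4*(Tb + 2*M)^3*M*Real.exp (-x/μ)
          + 4*(Tb + 2*M)^3*M * ((Real.exp (-α*x) - Real.exp (-x/μ))/(1 - μ*α)) := by
      rw [hsplit]
      refine le_trans (abs_add_le _ _) ?_
      have t2 := abs_add_le ((ψb μ - Tb^4)*Real.exp (-x/μ)) ((Tb^4 - Tinf^4)*Real.exp (-x/μ))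
      rw [abs_mul, abs_mul, abs_of_pos (Real.exp_pos (-x/μ))] at t2
      have t3 : |Tb^4 - Tinf^4|  * Real.exp (-x/μ) ≤ 4*(Tb + 2*M)^3*M*Real.exp (-x/μ) :=
        mul_le_mul_of_nonneg_right hTb4 (Real.exp_pos _).le
      linarith [hbnd]
    have key : 4*(Tb + 2*M)^3*M * Real.exp (-α * x) / (1 - μ * α)
        - (4*(Tb + 2*M)^3*M*Real.exp (-x/μ)
          + 4*(Tb + 2*M)^3*M * ((Real.exp (-α*x) - Real.exp (-x/μ))/(1 - μ*α)))
        = 4*(Tb + 2*M)^3*M*Real.exp (-x/μ)*(μ*α)/(1 - μ*α) := by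
      have hinv : (1 - μ*α) * (1 - μ*α)⁻¹ = 1 := mul_inv_cancel₀ (ne_of_gt hμα)
      linear_combination (4*(Tb + 2*M)^3*M*Real.exp (-x/μ)) * hinv
    have hnn : 0 ≤ 4*(Tb + 2*M)^3*M*Real.exp (-x/μ)*(μ*α)/(1 - μ*α) := by
      apply div_nonneg _ hμα.le
      positivity
    linarith [tri]
  · -- negative μ
    intro μ hμ
    obtain ⟨hμ1, hμ0⟩ := hμ
    have hμ' : μ ≠ 0 := ne_of_lt hμ0
    have hμinv : μ⁻¹ < 0 := inv_lt_zero.2 hμ0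
    have hβ0 : 0 < -μ⁻¹ := by linarith
    have hμα : 0 < 1 - μ*α := by nlinarith
    have hweq : ∀ s : ℝ, μ⁻¹ * Real.exp (-(x - s)/μ)
        = -((-μ⁻¹) * Real.exp ((-μ⁻¹)*x) * Real.exp (-(-μ⁻¹)*s)) := by
      intro s
      have hexp : -(x - s)/μ = (-μ⁻¹)*x + -(-μ⁻¹)*s := by
        field_simp
        ring
      rw [hexp, Real.exp_add]
      ring
    have hexp_int : IntegrableOn (fun s => Real.exp (-(-μ⁻¹)*s)) (Set.Ioi x) :=
      exp_neg_integrableOn_Ioi x hβ0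
    have hsub2 : Set.Ioi x ⊆ Set.Ici (0:ℝ) := fun s hs => le_trans hx0 (le_of_lt hs)
    have hTmeas : AEStronglyMeasurable (fun s => T s ^ 4) (volume.restrict (Set.Ioi x)) :=
      ((hTc.mono hsub2).pow 4).aestronglyMeasurable measurableSet_Ioi
    have hwmeas : AEStronglyMeasurable (fun s => μ⁻¹ * Real.exp (-(x - s)/μ) * T s ^ 4)
        (volume.restrict (Set.Ioi x)) := by
      have hwcont2 : Continuous (fun s : ℝ => μ⁻¹ * Real.exp (-(x - s)/μ)) := by fun_prop
      exact hwcont2.aestronglyMeasurable.mul hTmeas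
    have hBint : IntegrableOn
        (fun s => ((-μ⁻¹) * Real.exp ((-μ⁻¹)*x) * (Tb + 2*M)^4) * Real.exp (-(-μ⁻¹)*s))
        (Set.Ioi x) := hexp_int.const_mul _
    have hfint : IntegrableOn (fun s => μ⁻¹ * Real.exp (-(x - s)/μ) * T s ^ 4) (Set.Ioi x) := by
      apply Integrable.mono' hBint hwmeas
      filter_upwards [ae_restrict_mem measurableSet_Ioi] with s hs
      have hs0 : (0:ℝ) ≤ s := le_trans hx0 (le_of_lt hs)
      have hT := hTbd s hs0
      have h1 : ‖μ⁻¹ * Real.exp (-(x - s)/μ) * T s ^ 4‖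
          = (-μ⁻¹) * Real.exp ((-μ⁻¹)*x) * Real.exp (-(-μ⁻¹)*s) * |T s ^ 4| := by
        rw [Real.norm_eq_abs, abs_mul, hweq s, abs_neg,
          abs_of_nonneg (by positivity : (0:ℝ) ≤ (-μ⁻¹) * Real.exp ((-μ⁻¹)*x) * Real.exp (-(-μ⁻¹)*s))]
      rw [h1]
      have h2 : |T s ^ 4| ≤ (Tb + 2*M) ^ 4 := by
        rw [abs_of_nonneg (pow_nonneg hT.1 4)]
        exact pow_le_pow_left₀ hT.1 hT.2 4
      calc (-μ⁻¹) * Real.exp ((-μ⁻¹)*x) * Real.exp (-(-μ⁻¹)*s) * |T s ^ 4|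
          ≤ (-μ⁻¹) * Real.exp ((-μ⁻¹)*x) * Real.exp (-(-μ⁻¹)*s) * (Tb + 2*M)^4 :=
            mul_le_mul_of_nonneg_left h2 (by positivity)
        _ = ((-μ⁻¹) * Real.exp ((-μ⁻¹)*x) * (Tb + 2*M)^4) * Real.exp (-(-μ⁻¹)*s) := by ring
    have hgint : IntegrableOn (fun s => μ⁻¹ * Real.exp (-(x - s)/μ) * Tinf ^ 4) (Set.Ioi x) := by
      refine (hexp_int.const_mul (-((-μ⁻¹) * Real.exp ((-μ⁻¹)*x)) * Tinf^4)).congr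
        (Filter.Eventually.of_forall fun s => ?_)
      show -((-μ⁻¹) * Real.exp ((-μ⁻¹)*x)) * Tinf^4 * Real.exp (-(-μ⁻¹)*s)
          = μ⁻¹ * Real.exp (-(x - s)/μ) * Tinf ^ 4
      rw [hweq s]; ring
    have hexx : Real.exp ((-μ⁻¹)*x) * Real.exp (-(-μ⁻¹)*x) = 1 := by
      rw [← Real.exp_add]
      norm_num
    have hIg : ∫ s in Set.Ioi x, μ⁻¹ * Real.exp (-(x - s)/μ) * Tinf ^ 4 = -Tinf^4 := by
      calc ∫ s in Set.Ioi x, μ⁻¹ * Real.exp (-(x - s)/μ) * Tinf ^ 4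
          = ∫ s in Set.Ioi x, (-((-μ⁻¹) * Real.exp ((-μ⁻¹)*x)) * Tinf^4) * Real.exp (-(-μ⁻¹)*s) := by
            refine setIntegral_congr_fun measurableSet_Ioi fun s _ => ?_
            rw [hweq s]; ring
        _ = (-((-μ⁻¹) * Real.exp ((-μ⁻¹)*x)) * Tinf^4) * (Real.exp (-(-μ⁻¹)*x)/(-μ⁻¹)) := by
            rw [integral_const_mul, int_exp_Ioi _ x hβ0]
        _ = -Tinf^4 := by
            rw [div_eq_mul_inv,
              show -((-μ⁻¹) * Real.exp ((-μ⁻¹)*x)) * Tinf^4 * (Real.exp (-(-μ⁻¹)*x) * (-μ⁻¹)⁻¹)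
                = -((Real.exp ((-μ⁻¹)*x) * Real.exp (-(-μ⁻¹)*x)) * ((-μ⁻¹) * (-μ⁻¹)⁻¹) * Tinf^4)
                from by ring,
              hexx, mul_inv_cancel₀ (ne_of_gt hβ0)]
            ring
    have hψx := hψneg μ ⟨hμ1, hμ0⟩ x hx
    have hsplit : ψ x μ - Tinf^4
        = -∫ s in Set.Ioi x, (μ⁻¹ * Real.exp (-(x - s)/μ) * T s ^ 4
            - μ⁻¹ * Real.exp (-(x - s)/μ) * Tinf ^ 4) := by
      rw [integral_sub hfint hgint, hIg, hψx]
      ring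
    have hBint2 : IntegrableOn
        (fun s => (4*(Tb + 2*M)^3*M * (-μ⁻¹) * Real.exp ((-μ⁻¹)*x)) * Real.exp (-((-μ⁻¹)+α)*s))
        (Set.Ioi x) := (exp_neg_integrableOn_Ioi x (by positivity)).const_mul _
    have hptw2 : ∀ s ∈ Set.Ioi x,
        ‖μ⁻¹ * Real.exp (-(x - s)/μ) * T s ^ 4 - μ⁻¹ * Real.exp (-(x - s)/μ) * Tinf ^ 4‖
          ≤ (4*(Tb + 2*M)^3*M * (-μ⁻¹) * Real.exp ((-μ⁻¹)*x)) * Real.exp (-((-μ⁻¹)+α)*s) := by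
      intro s hs
      have hs0 : (0:ℝ) ≤ s := le_trans hx0 (le_of_lt hs)
      have h1 : ‖μ⁻¹ * Real.exp (-(x - s)/μ) * T s ^ 4 - μ⁻¹ * Real.exp (-(x - s)/μ) * Tinf ^ 4‖
          = (-μ⁻¹) * Real.exp ((-μ⁻¹)*x) * Real.exp (-(-μ⁻¹)*s) * |T s ^ 4 - Tinf ^ 4| := by
        rw [Real.norm_eq_abs,
          show μ⁻¹ * Real.exp (-(x - s)/μ) * T s ^ 4 - μ⁻¹ * Real.exp (-(x - s)/μ) * Tinf ^ 4
            = (μ⁻¹ * Real.exp (-(x - s)/μ)) * (T s ^ 4 - Tinf ^ 4) from by ring,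
          abs_mul, hweq s, abs_neg,
          abs_of_nonneg (by positivity : (0:ℝ) ≤ (-μ⁻¹) * Real.exp ((-μ⁻¹)*x) * Real.exp (-(-μ⁻¹)*s))]
      rw [h1]
      calc (-μ⁻¹) * Real.exp ((-μ⁻¹)*x) * Real.exp (-(-μ⁻¹)*s) * |T s ^ 4 - Tinf ^ 4|
          ≤ (-μ⁻¹) * Real.exp ((-μ⁻¹)*x) * Real.exp (-(-μ⁻¹)*s) * (4*(Tb + 2*M)^3*M * Real.exp (-α*s)) :=
            mul_le_mul_of_nonneg_left (hT4 s hs0) (by positivity)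
        _ = (4*(Tb + 2*M)^3*M * (-μ⁻¹) * Real.exp ((-μ⁻¹)*x)) * (Real.exp (-(-μ⁻¹)*s) * Real.exp (-α*s)) := by
            ring
        _ = (4*(Tb + 2*M)^3*M * (-μ⁻¹) * Real.exp ((-μ⁻¹)*x)) * Real.exp (-((-μ⁻¹)+α)*s) := by
            rw [← Real.exp_add]
            congr 1
            ring
    have hval : ∫ s in Set.Ioi x, (4*(Tb + 2*M)^3*M * (-μ⁻¹) * Real.exp ((-μ⁻¹)*x)) * Real.exp (-((-μ⁻¹)+α)*s)
        = 4*(Tb + 2*M)^3*M * Real.exp (-α * x) / (1 - μ * α) := by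
      rw [integral_const_mul, int_exp_Ioi _ x (by positivity)]
      have hβα : (0:ℝ) < (-μ⁻¹) + α := by positivity
      have hkey : (-μ⁻¹) + α = (1 - μ*α) * (-μ⁻¹) := by
        field_simp
        ring
      have hexp2 : Real.exp ((-μ⁻¹)*x) * Real.exp (-((-μ⁻¹)+α)*x) = Real.exp (-α*x) := by
        rw [← Real.exp_add]
        congr 1
        ring
      rw [← mul_div_assoc, hkey,
        div_eq_div_iff (mul_ne_zero (ne_of_gt hμα) (ne_of_gt hβ0)) (ne_of_gt hμα)]
      have hexp3 : Real.exp (-μ⁻¹*x) * Real.exp (-((1 - μ*α) * -μ⁻¹)*x) = Real.exp (-α*x) := by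
        rw [← Real.exp_add]
        congr 1
        field_simp
        ring
      linear_combination (4*(Tb + 2*M)^3*M * (-μ⁻¹) * (1 - μ*α)) * hexp3
    have step1 : ‖∫ s in Set.Ioi x, (μ⁻¹ * Real.exp (-(x - s)/μ) * T s ^ 4
            - μ⁻¹ * Real.exp (-(x - s)/μ) * Tinf ^ 4)‖
        ≤ ∫ s in Set.Ioi x, ‖μ⁻¹ * Real.exp (-(x - s)/μ) * T s ^ 4
            - μ⁻¹ * Real.exp (-(x - s)/μ) * Tinf ^ 4‖ :=
      norm_integral_le_integral_norm _
    have step2 : (∫ s in Set.Ioi x, ‖μ⁻¹ * Real.exp (-(x - s)/μ) * T s ^ 4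
            - μ⁻¹ * Real.exp (-(x - s)/μ) * Tinf ^ 4‖)
        ≤ ∫ s in Set.Ioi x, (4*(Tb + 2*M)^3*M * (-μ⁻¹) * Real.exp ((-μ⁻¹)*x)) * Real.exp (-((-μ⁻¹)+α)*s) :=
      setIntegral_mono_on ((hfint.sub hgint).norm) hBint2 measurableSet_Ioi hptw2
    rw [hsplit, abs_neg, ← Real.norm_eq_abs]
    linarith [step1, step2, hval.le]
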